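/- Let (G_i) be a sequence of finite groups and (G'_i ⊆ G_i) a sequence of subgroups with uniformly bounded indices [G_i : G'_i] ≤ C. Then the unbounded ranks of (G'_i) and (G_i) coincide. -/

import Mathlib

/-- A subgroup of an abelian (additive) group generated by `S.card` elements is
generated by at most `S.card` elements. -/
lemma exists_finset_card_le_closure_eq_add {A : Type} [AddCommGroup A]
    (K : AddSubgroup A) (S : Finset A)
    (hS : AddSubgroup.closure (S : Set A) = ⊤) :
    ∃ T : Finset A, T.card ≤ S.card ∧ AddSubgroup.closure (T : Set A) = K := by
  classical
  set n := S.card with hn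
  obtain ⟨f, hf⟩ : ∃ f : Fin n → A, Set.range f = (S : Set A) := by
    refine ⟨fun i => ((S.equivFin.symm i : {x // x ∈ S}) : A), ?_⟩
    have h1 : Set.range (fun i => ((S.equivFin.symm i : {x // x ∈ S}) : A)) =
        Set.range (Subtype.val : {x // x ∈ S} → A) :=
      Function.Surjective.range_comp S.equivFin.symm.surjective _
    rw [h1]
    ext x; simp
  have hsp : Submodule.span ℤ (S : Set A) = ⊤ := by
    rw [eq_top_iff]
    rintro x -
    have hx : x ∈ AddSubgroup.closure (S : Set A) := by rw [hS]; trivial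
    rwa [← Submodule.span_int_eq_addSubgroupClosure, Submodule.mem_toAddSubgroup] at hx
  let b := Pi.basisFun ℤ (Fin n)
  let φ : (Fin n → ℤ) →ₗ[ℤ] A := b.constr ℤ f
  have hφ : Function.Surjective φ := by
    rw [← LinearMap.range_eq_top, Module.Basis.constr_range, hf, hsp]
  let N : Submodule ℤ (Fin n → ℤ) := (AddSubgroup.toIntSubmodule K).comap φ
  obtain ⟨t, bN⟩ := Submodule.basisOfPid b N
  have ht : t ≤ n := by
    have h1 : Module.finrank ℤ N = t := by
      simpa using Module.finrank_eq_card_basis bN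
    have h2 := N.finrank_le
    rwa [h1, Module.finrank_pi, Fintype.card_fin] at h2
  let g : Fin t → A := fun j => φ (bN j : Fin n → ℤ)
  refine ⟨Finset.image g Finset.univ, ?_, ?_⟩
  · calc (Finset.image g Finset.univ).card ≤ Finset.univ.card := Finset.card_image_le
      _ = t := by simp
      _ ≤ n := ht
  · have hspan : Submodule.span ℤ (↑(Finset.image g Finset.univ) : Set A)
        = AddSubgroup.toIntSubmodule K := by
      rw [Finset.coe_image, Finset.coe_univ, Set.image_univ]
      have hg : Set.range g = φ '' (Set.range (fun j => (bN j : Fin n → ℤ))) := by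
        rw [← Set.range_comp]; rfl
      have h3 : Submodule.span ℤ (Set.range (fun j => (bN j : Fin n → ℤ))) = N := by
        have he : (fun j => (bN j : Fin n → ℤ)) = (N.subtype) ∘ bN := rfl
        rw [he, Set.range_comp, Submodule.span_image, bN.span_eq, Submodule.map_top,
          Submodule.range_subtype]
      rw [hg, Submodule.span_image, h3]
      exact Submodule.map_comap_eq_of_surjective hφ _
    have h4 := Submodule.span_int_eq_addSubgroupClosure
      (↑(Finset.image g Finset.univ) : Set A)
    rw [hspan, AddSubgroup.toIntSubmodule_toAddSubgroup] at h4
    exact h4.symm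

/-- Closure commutes with passing to `Additive`. -/
lemma toAddSubgroup_closure' {H : Type} [Group H] (s : Set H) :
    Subgroup.toAddSubgroup (Subgroup.closure s)
      = AddSubgroup.closure (Additive.toMul ⁻¹' s) :=
  le_antisymm
    (Subgroup.toAddSubgroup.le_symm_apply.1 <|
      (Subgroup.closure_le _).2 (AddSubgroup.subset_closure (G := Additive H)))
    ((AddSubgroup.closure_le _).2 <| Subgroup.subset_closure (G := H))

/-- Multiplicative version. -/
lemma exists_finset_card_le_closure_eq_comm {H : Type} [CommGroup H] (K : Subgroup H)
    (S : Finset H) (hS : Subgroup.closure (S : Set H) = ⊤) :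
    ∃ T : Finset H, T.card ≤ S.card ∧ Subgroup.closure (T : Set H) = K := by
  classical
  have hco : (↑(S.map Additive.ofMul.toEmbedding) : Set (Additive H))
      = Additive.toMul ⁻¹' (S : Set H) := by
    rw [Finset.coe_map]
    exact Equiv.image_eq_preimage_symm _ _
  have hgen : AddSubgroup.closure
      (↑(S.map Additive.ofMul.toEmbedding) : Set (Additive H)) = ⊤ := by
    rw [hco, ← toAddSubgroup_closure', hS]
    rfl
  obtain ⟨T', hc, hT'⟩ := exists_finset_card_le_closure_eq_add (A := Additive H)
      (Subgroup.toAddSubgroup K) (S.map Additive.ofMul.toEmbedding) hgen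
  refine ⟨T'.map Additive.toMul.toEmbedding, by simpa using hc, ?_⟩
  apply Subgroup.toAddSubgroup.injective
  rw [toAddSubgroup_closure']
  have hcoe : Additive.toMul ⁻¹' (↑(T'.map Additive.toMul.toEmbedding) : Set H)
      = (T' : Set (Additive H)) := by
    rw [Finset.coe_map]
    exact Set.preimage_image_eq _ Additive.toMul.injective
  rw [hcoe, hT']

/-- Ambient version: a subgroup contained in an abelian subgroup generated by `S` is
generated by at most `S.card` elements. -/
lemma exists_finset_card_le_closure_eq {G : Type} [Group G] (S : Finset G)
    (hcomm : ∀ a b : Subgroup.closure (S : Set G), a * b = b * a)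
    (K : Subgroup G) (hK : K ≤ Subgroup.closure (S : Set G)) :
    ∃ T : Finset G, T.card ≤ S.card ∧ Subgroup.closure (T : Set G) = K := by
  classical
  set H := Subgroup.closure (S : Set G) with hH
  letI : CommGroup H := { (inferInstance : Group H) with mul_comm := hcomm }
  let S₀ : Finset H := S.attach.map
    ⟨fun x => (⟨x.1, hH ▸ Subgroup.subset_closure x.2⟩ : H),
     fun a b hab => Subtype.ext (by simpa using hab)⟩
  have hS₀coe : (S₀ : Set H) = (H.subtype) ⁻¹' (S : Set G) := by
    ext y
    simp only [Finset.mem_coe, Set.mem_preimage, Subgroup.coe_subtype, S₀, Finset.mem_map,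
      Finset.mem_attach, true_and, Function.Embedding.coeFn_mk]
    constructor
    · rintro ⟨x, rfl⟩; exact x.2
    · intro hy; exact ⟨⟨(y : G), hy⟩, Subtype.ext rfl⟩
  have hS₀ : Subgroup.closure (S₀ : Set H) = ⊤ := by
    rw [hS₀coe]
    exact Subgroup.closure_preimage_eq_top (S : Set G)
  obtain ⟨T₀, hT₀card, hT₀⟩ := exists_finset_card_le_closure_eq_comm
    (K.subgroupOf H) S₀ hS₀
  refine ⟨T₀.image (fun x => x.1), ?_, ?_⟩
  · calc (T₀.image (fun x => x.1)).card ≤ T₀.card := Finset.card_image_le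
      _ ≤ S₀.card := hT₀card
      _ = S.card := by simp [S₀]
  · rw [Finset.coe_image]
    have h5 : (fun x : H => x.1) '' ↑T₀ = (H.subtype) '' ↑T₀ := rfl
    rw [h5, ← MonoidHom.map_closure, hT₀, Subgroup.subgroupOf_map_subtype,
      inf_eq_left.mpr hK]

/-- `URankLE G s` : the sequence of groups `(G i)` has unbounded rank at most `s`,
i.e. there is a constant `L` such that for infinitely many `i` there is an abelian
subgroup `H ⊆ G i`, generated by at most `s` elements, of (finite) index at most `L`. -/
def URankLE (G : ℕ → Type) [∀ i, Group (G i)] (s : ℕ) : Prop :=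
  ∃ L : ℕ, {i : ℕ | ∃ H : Subgroup (G i),
      (∀ a b : H, a * b = b * a) ∧
      (∃ S : Finset (G i), S.card ≤ s ∧ Subgroup.closure (S : Set (G i)) = H) ∧
      H.index ≠ 0 ∧ H.index ≤ L}.Infinite

lemma urank_fwd (G : ℕ → Type) [∀ i, Group (G i)] [∀ i, Fintype (G i)]
    (G' : ∀ i, Subgroup (G i)) (C : ℕ) (hbdd : ∀ i, (G' i).index ≤ C) (s : ℕ)
    (h : URankLE (fun i => ↥(G' i)) s) : URankLE G s := by
  classical
  obtain ⟨L, hL⟩ := h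
  refine ⟨L * C, hL.mono ?_⟩
  rintro i ⟨H, hcomm, ⟨S, hScard, hSclo⟩, -, hidx⟩
  refine ⟨H.map (G' i).subtype, ?_, ⟨S.image ((G' i).subtype), ?_, ?_⟩, ?_, ?_⟩
  · rintro ⟨a, ha⟩ ⟨b, hb⟩
    obtain ⟨a', ha', rfl⟩ := ha
    obtain ⟨b', hb', rfl⟩ := hb
    have h1 := hcomm ⟨a', ha'⟩ ⟨b', hb'⟩
    have h2 : (a' * b' : ↥(G' i)) = b' * a' := congrArg Subtype.val h1
    apply Subtype.ext
    have h3 := congrArg Subtype.val h2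
    simpa using h3
  · exact Finset.card_image_le.trans hScard
  · rw [Finset.coe_image, ← MonoidHom.map_closure, hSclo]
  · exact Subgroup.index_ne_zero_of_finite
  · rw [Subgroup.index_map_of_injective _ (G' i).subtype_injective,
      Subgroup.range_subtype]
    exact Nat.mul_le_mul hidx (hbdd i)

lemma urank_bwd (G : ℕ → Type) [∀ i, Group (G i)] [∀ i, Fintype (G i)]
    (G' : ∀ i, Subgroup (G i)) (s : ℕ)
    (h : URankLE G s) : URankLE (fun i => ↥(G' i)) s := by
  classical
  obtain ⟨L, hL⟩ := h
  refine ⟨L, hL.mono ?_⟩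
  rintro i ⟨H, hcomm, ⟨S, hScard, hSclo⟩, hne, hidx⟩
  subst hSclo
  obtain ⟨T, hTcard, hTclo⟩ := exists_finset_card_le_closure_eq S hcomm
    (Subgroup.closure (S : Set (G i)) ⊓ G' i) inf_le_left
  have hsub : ∀ x ∈ T, x ∈ G' i := fun x hx =>
    (inf_le_right : Subgroup.closure (S : Set (G i)) ⊓ G' i ≤ G' i)
      (hTclo ▸ Subgroup.subset_closure hx)
  let T' : Finset ↥(G' i) := T.preimage Subtype.val (Subtype.val_injective.injOn)
  refine ⟨(Subgroup.closure (S : Set (G i))).subgroupOf (G' i), ?_, ⟨T', ?_, ?_⟩, ?_, ?_⟩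
  · intro a b
    have ha := Subgroup.mem_subgroupOf.mp a.2
    have hb := Subgroup.mem_subgroupOf.mp b.2
    have h1 := hcomm ⟨_, ha⟩ ⟨_, hb⟩
    apply Subtype.ext
    apply Subtype.ext
    have h2 := congrArg Subtype.val h1
    simpa using h2
  · have : T'.card ≤ T.card := by
      apply Finset.card_le_card_of_injOn Subtype.val
      · intro y hy
        simpa [T', Finset.mem_preimage] using hy
      · exact Subtype.val_injective.injOn
    exact this.trans (hTcard.trans hScard)
  · apply Subgroup.map_injective (G' i).subtype_injective
    rw [MonoidHom.map_closure]
    have hcoe : ((G' i).subtype) '' (T' : Set ↥(G' i)) = (T : Set (G i)) := by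
      rw [Finset.coe_preimage]
      have : ((G' i).subtype) '' (Subtype.val ⁻¹' (T : Set (G i)))
          = Subtype.val '' (Subtype.val ⁻¹' (T : Set (G i))) := rfl
      rw [this, Set.image_preimage_eq_inter_range, Subtype.range_coe]
      exact Set.inter_eq_left.mpr (fun x hx => hsub x hx)
    rw [hcoe, hTclo, Subgroup.subgroupOf_map_subtype]

  · exact Subgroup.index_ne_zero_of_finite
  · have h0 : (Subgroup.closure (S : Set (G i))).relIndex ⊤ ≠ 0 := by
      rwa [Subgroup.relIndex_top_right]
    have hle : (Subgroup.closure (S : Set (G i))).relIndex (G' i)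
        ≤ (Subgroup.closure (S : Set (G i))).index := by
      rw [← Subgroup.relIndex_top_right]
      exact Subgroup.relIndex_le_of_le_right le_top h0
    exact hle.trans hidx

/-- If `(G'_i ⊆ G_i)` is a sequence of subgroups of uniformly bounded index, then the
unbounded ranks of `(G'_i)` and `(G_i)` coincide. -/
theorem stmt15 (G : ℕ → Type) [∀ i, Group (G i)] [∀ i, Fintype (G i)]
    (G' : ∀ i, Subgroup (G i)) (C : ℕ) (hbdd : ∀ i, (G' i).index ≤ C) :
    sInf {s : ℕ | URankLE (fun i => ↥(G' i)) s} = sInf {s : ℕ | URankLE G s} := by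
  congr 1
  ext s
  exact ⟨urank_fwd G G' C hbdd s, urank_bwd G G' s⟩
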